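/- Let K ≥ 1, let Y = Z = {0,1}^K with the discrete σ-algebra, and let ℓ(y,z) = (1/K)·Σ_{i=1}^K 1{y^i ≠ z^i} be the normalized Hamming loss. Suppose there exist h_{-1}, h_{+1} ∈ H and x ∈ X with η := ℓ(h_{-1}(x), h_{+1}(x)) > 0. Then for every online learner A and every T ≥ 1, there exists a stream (x_1,y_1),…,(x_T,y_T) (with x_t = x for all t and each y_t ∈ {h_{-1}(x), h_{+1}(x)}) on which the expected regret of A is at least η·√(T/8). -/

import Mathlib

open MeasureTheory

/-- The expected regret of the online learner `A` on the stream `s` of length `T`. -/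
noncomputable def expectedRegret {X Y Z : Type*} [MeasurableSpace Z] (H : Set (X → Z))
    (ℓ : Y → Z → ℝ) (A : List (X × Y) → X → ProbabilityMeasure Z)
    {T : ℕ} (s : Fin T → X × Y) : ℝ :=
  (∑ t : Fin T, ∫ z, ℓ (s t).2 z ∂(A ((List.ofFn s).take t.1) (s t).1 : Measure Z)) -
    ⨅ h : H, ∑ t : Fin T, ℓ (s t).2 ((h : X → Z) (s t).1)

/-- The normalized Hamming loss on `{0,1}^K` (encoded as `Fin K → Bool`). -/
noncomputable def hammingLoss (K : ℕ) (y z : Fin K → Bool) : ℝ :=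
  (1 / (K : ℝ)) * ∑ i : Fin K, if y i = z i then 0 else 1

section Aux

lemma hammingLoss_nonneg (K : ℕ) (y z : Fin K → Bool) : 0 ≤ hammingLoss K y z := by
  unfold hammingLoss
  apply mul_nonneg (by positivity)
  apply Finset.sum_nonneg
  intro i _
  split <;> norm_num

lemma hammingLoss_self (K : ℕ) (y : Fin K → Bool) : hammingLoss K y y = 0 := by
  simp [hammingLoss]

lemma hammingLoss_comm (K : ℕ) (y z : Fin K → Bool) :
    hammingLoss K y z = hammingLoss K z y := by
  unfold hammingLoss
  congr 1
  apply Finset.sum_congr rfl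
  intro i _
  simp [eq_comm]

lemma hammingLoss_triangle (K : ℕ) (y z w : Fin K → Bool) :
    hammingLoss K y z ≤ hammingLoss K y w + hammingLoss K z w := by
  unfold hammingLoss
  rw [← mul_add, ← Finset.sum_add_distrib]
  apply mul_le_mul_of_nonneg_left _ (by positivity)
  apply Finset.sum_le_sum
  intro i _
  by_cases h1 : y i = w i
  · by_cases h2 : z i = w i
    · simp [h1, h2, h1.trans h2.symm]
    · have h3 : (if y i = z i then (0:ℝ) else 1) ≤ 1 := by split <;> norm_num
      simp only [if_pos h1, if_neg h2]
      linarith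
  · have h3 : (if y i = z i then (0:ℝ) else 1) ≤ 1 := by split <;> norm_num
    have h0 : (0:ℝ) ≤ (if z i = w i then (0:ℝ) else 1) := by split <;> norm_num
    simp only [if_neg h1]
    linarith

/-- The adversarial stream determined by a sign pattern `ε`. -/
def strm {X : Type*} (K : ℕ) (a b : Fin K → Bool) (x : X) (T : ℕ) (ε : Fin T → Bool) :
    Fin T → X × (Fin K → Bool) := fun t => (x, if ε t then a else b)

/-- number of `true`s in a sign pattern -/
def cntB {T : ℕ} (ε : Fin T → Bool) : ℕ := (Finset.univ.filter fun t => ε t = true).card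

end Aux

lemma centralBinom_sq_bound (m : ℕ) : 16 ^ m ≤ (Nat.centralBinom m) ^ 2 * (4 * m + 1) := by
  induction m with
  | zero => simp [Nat.centralBinom]
  | succ m ih =>
    have key := Nat.succ_mul_centralBinom_succ m
    have h1 : (2 * m + 1) ^ 2 * (4 * (m + 1) + 1) ≥ (2 * m + 2) ^ 2 * (4 * m + 1) := by nlinarith
    have h2 : (m + 1) ^ 2 * (Nat.centralBinom (m + 1) ^ 2 * (4 * (m + 1) + 1))
        = (2 * (2 * m + 1)) ^ 2 * Nat.centralBinom m ^ 2 * (4 * (m + 1) + 1) := by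
      rw [show (m + 1) ^ 2 * (Nat.centralBinom (m + 1) ^ 2 * (4 * (m + 1) + 1))
          = ((m + 1) * Nat.centralBinom (m + 1)) ^ 2 * (4 * (m + 1) + 1) by ring, key]
      ring
    have h3 : (m + 1) ^ 2 * 16 ^ (m + 1) ≤ (m + 1) ^ 2 * (Nat.centralBinom (m + 1) ^ 2 * (4 * (m + 1) + 1)) := by
      rw [h2]
      calc (m + 1) ^ 2 * 16 ^ (m + 1) = 4 * (2 * m + 2) ^ 2 * 16 ^ m := by ring
        _ ≤ 4 * (2 * m + 2) ^ 2 * (Nat.centralBinom m ^ 2 * (4 * m + 1)) :=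
            Nat.mul_le_mul_left _ ih
        _ = (2 * m + 2) ^ 2 * (4 * m + 1) * (4 * Nat.centralBinom m ^ 2) := by ring
        _ ≤ (2 * m + 1) ^ 2 * (4 * (m + 1) + 1) * (4 * Nat.centralBinom m ^ 2) :=
            Nat.mul_le_mul_right _ h1
        _ = (2 * (2 * m + 1)) ^ 2 * Nat.centralBinom m ^ 2 * (4 * (m + 1) + 1) := by ring
    exact Nat.le_of_mul_le_mul_left h3 (by positivity)

lemma centralBinom_real_bound (m : ℕ) :
    4 ^ m * (Real.sqrt (m + 1) - Real.sqrt m) ≤ (Nat.centralBinom m : ℝ) := by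
  have h := centralBinom_sq_bound m
  have hcast : (16 : ℝ) ^ m ≤ (Nat.centralBinom m : ℝ) ^ 2 * (4 * m + 1) := by
    exact_mod_cast h
  set C := (Nat.centralBinom m : ℝ)
  have hC : 0 ≤ C := Nat.cast_nonneg _
  set s1 := Real.sqrt m
  set s2 := Real.sqrt (m + 1)
  set s3 := Real.sqrt (4 * m + 1)
  have hs1 : s1 ^ 2 = m := Real.sq_sqrt (by positivity)
  have hs2 : s2 ^ 2 = m + 1 := Real.sq_sqrt (by positivity)
  have hs3 : s3 ^ 2 = 4 * m + 1 := Real.sq_sqrt (by positivity)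
  have hs1n : 0 ≤ s1 := Real.sqrt_nonneg _
  have hs2n : 0 ≤ s2 := Real.sqrt_nonneg _
  have hs3n : 0 ≤ s3 := Real.sqrt_nonneg _
  -- s3 ≤ s1 + s2
  have h34 : s3 ≤ s1 + s2 := by
    have hmul : s1 * s2 = Real.sqrt ((m:ℝ) * (m + 1)) := (Real.sqrt_mul (by positivity) _).symm
    have hge : (m:ℝ) ≤ Real.sqrt ((m:ℝ) * (m + 1)) :=
      Real.le_sqrt_of_sq_le (by nlinarith)
    have hsq : (4 * (m:ℝ) + 1) ≤ (s1 + s2) ^ 2 := by nlinarith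
    calc s3 ≤ Real.sqrt ((s1 + s2) ^ 2) := Real.sqrt_le_sqrt hsq
      _ = s1 + s2 := Real.sqrt_sq (by positivity)
  -- C * s3 ≥ 4^m
  have hCs3 : (4:ℝ) ^ m ≤ C * s3 := by
    have h16 : (16:ℝ) ^ m = ((4:ℝ) ^ m) ^ 2 := by
      rw [← pow_mul, mul_comm, pow_mul]; norm_num
    nlinarith [sq_nonneg (C * s3 - 4 ^ m), pow_pos (show (0:ℝ) < 4 by norm_num) m, mul_nonneg hC hs3n]
  -- (s2 - s1) * (s2 + s1) = 1
  have hdiff : (s2 - s1) * (s2 + s1) = 1 := by nlinarith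
  have hs3pos : 0 < s3 := Real.sqrt_pos.mpr (by positivity)
  -- 4^m (s2 - s1) ≤ C s3 (s2 - s1) ≤ C s3 / (s1+s2) ... finish
  have hd : 0 ≤ s2 - s1 := by
    have := Real.sqrt_le_sqrt (show (m:ℝ) ≤ m + 1 by linarith)
    linarith
  calc (4:ℝ) ^ m * (s2 - s1) ≤ (C * s3) * (s2 - s1) := by
        exact mul_le_mul_of_nonneg_right hCs3 hd
    _ ≤ (C * (s1 + s2)) * (s2 - s1) := by
        have := mul_le_mul_of_nonneg_left h34 hC
        exact mul_le_mul_of_nonneg_right this hd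
    _ = C * ((s2 - s1) * (s2 + s1)) := by ring
    _ = C := by rw [hdiff]; ring

lemma card_cntB_eq (T k : ℕ) :
    (Finset.univ.filter fun ε : Fin T → Bool => cntB ε = k).card = T.choose k := by
  have : (Finset.univ.filter fun ε : Fin T → Bool => cntB ε = k).card
      = (Finset.powersetCard k (Finset.univ : Finset (Fin T))).card := by
    refine Finset.card_nbij' (fun ε => Finset.univ.filter fun t => ε t = true)
      (fun S => fun t => decide (t ∈ S)) ?_ ?_ ?_ ?_
    · intro ε hε
      rw [Finset.mem_coe, Finset.mem_powersetCard]
      exact ⟨Finset.subset_univ _, (Finset.mem_filter.mp (Finset.mem_coe.mp hε)).2⟩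
    · intro S hS
      rw [Finset.mem_coe, Finset.mem_filter]
      refine ⟨Finset.mem_univ _, ?_⟩
      have h1 : (Finset.univ.filter fun t => decide (t ∈ S) = true) = S := by
        ext t; simp
      rw [Finset.mem_coe, Finset.mem_powersetCard] at hS
      simp only [cntB, h1, hS.2]
    · intro ε hε
      funext t
      simp
    · intro S hS
      ext t; simp
  rw [this, Finset.card_powersetCard, Finset.card_univ, Fintype.card_fin]

noncomputable def sAbs (T : ℕ) : ℝ := ∑ ε : Fin T → Bool, |2 * (cntB ε : ℝ) - T|

lemma cntB_cons {T : ℕ} (y : Bool) (ε : Fin T → Bool) :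
    cntB (Fin.cons y ε) = (if y then 1 else 0) + cntB ε := by
  unfold cntB
  rw [Finset.card_filter, Finset.card_filter, Fin.sum_univ_succ]
  simp

lemma sAbs_rec (T : ℕ) :
    2 * sAbs T + (if 2 ∣ T then 2 * (T.choose (T / 2) : ℝ) else 0) ≤ sAbs (T + 1) := by
  have he : sAbs (T + 1)
      = ∑ p : Bool × (Fin T → Bool), |2 * (cntB (Fin.cons p.1 p.2) : ℝ) - (T + 1 : ℕ)| := by
    unfold sAbs
    rw [← ((Fin.consEquiv (fun _ : Fin (T+1) => Bool)).sum_comp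
      (fun ε => |2 * (cntB ε : ℝ) - ((T + 1 : ℕ) : ℝ)|))]
    rfl
  have he2 : sAbs (T + 1)
      = ∑ ε : Fin T → Bool, (|2 * ((cntB ε : ℝ) + 1) - (T + 1)| + |2 * (cntB ε : ℝ) - (T + 1)|) := by
    rw [he, Fintype.sum_prod_type, Fintype.sum_bool, ← Finset.sum_add_distrib]
    apply Finset.sum_congr rfl
    intro ε _
    rw [cntB_cons, cntB_cons]
    simp only [if_pos, if_neg, Bool.false_eq_true, not_false_iff, ite_true, ite_false]
    push_cast
    ring_nf
  have hind : ∑ ε : Fin T → Bool, (if 2 * cntB ε = T then (2:ℝ) else 0)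
      = (if 2 ∣ T then 2 * (T.choose (T / 2) : ℝ) else 0) := by
    rw [Finset.sum_ite, Finset.sum_const, Finset.sum_const_zero, add_zero]
    by_cases hT : 2 ∣ T
    · rw [if_pos hT]
      have hfe : (Finset.univ.filter fun ε : Fin T → Bool => 2 * cntB ε = T)
          = (Finset.univ.filter fun ε : Fin T → Bool => cntB ε = T / 2) := by
        apply Finset.filter_congr
        intro ε _
        constructor <;> (intro h; omega)
      rw [hfe, card_cntB_eq]
      rw [nsmul_eq_mul]
      ring
    · rw [if_neg hT]
      have hfe : (Finset.univ.filter fun ε : Fin T → Bool => 2 * cntB ε = T) = ∅ := by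
        apply Finset.filter_false_of_mem
        intro ε _
        omega
      rw [hfe]
      simp
  have key : ∀ ε : Fin T → Bool,
      2 * |2 * (cntB ε : ℝ) - T| + (if 2 * cntB ε = T then (2:ℝ) else 0)
      ≤ |2 * ((cntB ε : ℝ) + 1) - (T + 1)| + |2 * (cntB ε : ℝ) - (T + 1)| := by
    intro ε
    set u : ℝ := 2 * (cntB ε : ℝ) - T with hu
    have h1 : 2 * ((cntB ε : ℝ) + 1) - (T + 1) = u + 1 := by rw [hu]; ring
    have h2 : 2 * (cntB ε : ℝ) - (T + 1) = u - 1 := by rw [hu]; ring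
    rw [h1, h2]
    by_cases h : 2 * cntB ε = T
    · have hu0 : u = 0 := by
        rw [hu]; push_cast [← h]; ring
      rw [if_pos h, hu0]
      norm_num
    · have habs : |2 * u| ≤ |u + 1| + |u - 1| := by
        calc |2 * u| = |(u + 1) + (u - 1)| := by ring_nf
          _ ≤ |u + 1| + |u - 1| := abs_add_le _ _
      rw [abs_mul, abs_two] at habs
      rw [if_neg h, add_zero]
      linarith
  calc 2 * sAbs T + (if 2 ∣ T then 2 * (T.choose (T / 2) : ℝ) else 0)
      = ∑ ε : Fin T → Bool,
          (2 * |2 * (cntB ε : ℝ) - T| + (if 2 * cntB ε = T then (2:ℝ) else 0)) := by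
        rw [Finset.sum_add_distrib, ← Finset.mul_sum, hind]
        rfl
    _ ≤ _ := by rw [he2]; exact Finset.sum_le_sum (fun ε _ => key ε)

lemma sAbs_pair (m : ℕ) :
    4 ^ m * Real.sqrt m ≤ sAbs (2 * m) ∧ 2 * 4 ^ m * Real.sqrt (m + 1) ≤ sAbs (2 * m + 1) := by
  induction m with
  | zero =>
    have h0 : sAbs 0 = 0 := by
      simp [sAbs, cntB]
    constructor
    · simp [h0]
    · have h := sAbs_rec 0
      rw [h0] at h
      norm_num at h ⊢
      first
      | linarith
      | (rw [Real.sqrt_one]; linarith)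
  | succ m ih =>
    obtain ⟨ihe, iho⟩ := ih
    have heven : 4 ^ (m + 1) * Real.sqrt (m + 1) ≤ sAbs (2 * (m + 1)) := by
      have hrec := sAbs_rec (2 * m + 1)
      have hodd : ¬ (2 ∣ (2 * m + 1)) := by omega
      rw [if_neg hodd, add_zero] at hrec
      have h2 : (2 * (m + 1)) = (2 * m + 1) + 1 := by ring
      rw [h2]
      calc 4 ^ (m + 1) * Real.sqrt (m + 1) = 2 * (2 * 4 ^ m * Real.sqrt (m + 1)) := by ring
        _ ≤ 2 * sAbs (2 * m + 1) := by linarith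
        _ ≤ sAbs ((2 * m + 1) + 1) := hrec
    refine ⟨by push_cast; exact heven, ?_⟩
    show 2 * 4 ^ (m + 1) * Real.sqrt (((m + 1 : ℕ) : ℝ) + 1) ≤ sAbs (2 * (m + 1) + 1)
    push_cast
    have hrec := sAbs_rec (2 * (m + 1))
    have hev : 2 ∣ 2 * (m + 1) := ⟨m + 1, rfl⟩
    rw [if_pos hev] at hrec
    have hch : (2 * (m + 1)).choose (2 * (m + 1) / 2) = Nat.centralBinom (m + 1) := by
      rw [Nat.centralBinom]
      congr 1
      omega
    rw [hch] at hrec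
    have hcb := centralBinom_real_bound (m + 1)
    push_cast at hcb
    calc 2 * 4 ^ (m + 1) * Real.sqrt (m + 1 + 1)
        = 2 * (4 ^ (m + 1) * Real.sqrt (m + 1)) +
          2 * (4 ^ (m + 1) * (Real.sqrt ((m:ℝ) + 1 + 1) - Real.sqrt ((m:ℝ) + 1))) := by
          push_cast; ring
      _ ≤ 2 * sAbs (2 * (m + 1)) + 2 * (Nat.centralBinom (m + 1) : ℝ) := by
          have := mul_le_mul_of_nonneg_left hcb (by norm_num : (0:ℝ) ≤ 2)
          have h2 := mul_le_mul_of_nonneg_left heven (by norm_num : (0:ℝ) ≤ 2)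
          push_cast at *
          linarith
      _ ≤ sAbs (2 * (m + 1) + 1) := hrec

lemma sqrt_half_le_sAbs (T : ℕ) : 2 ^ T * Real.sqrt ((T : ℝ) / 2) ≤ sAbs T := by
  rcases Nat.even_or_odd T with ⟨m, hm⟩ | ⟨m, hm⟩
  · subst hm
    have h := (sAbs_pair m).1
    have h1 : ((m + m : ℕ) : ℝ) / 2 = m := by push_cast; ring
    have h2 : (2:ℝ) ^ (m + m) = 4 ^ m := by
      rw [show m + m = 2 * m by ring, pow_mul]; norm_num
    rw [h1, h2, show m + m = 2 * m by ring]
    exact h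
  · subst hm
    have h := (sAbs_pair m).2
    have h2 : (2:ℝ) ^ (2 * m + 1) = 2 * 4 ^ m := by
      rw [pow_succ, pow_mul]; norm_num; ring
    rw [h2]
    have hmono : Real.sqrt (((2 * m + 1 : ℕ) : ℝ) / 2) ≤ Real.sqrt ((m:ℝ) + 1) := by
      apply Real.sqrt_le_sqrt
      push_cast
      linarith
    calc 2 * 4 ^ m * Real.sqrt (((2 * m + 1 : ℕ) : ℝ) / 2)
        ≤ 2 * 4 ^ m * Real.sqrt ((m:ℝ) + 1) := by
          apply mul_le_mul_of_nonneg_left hmono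
          positivity
      _ ≤ sAbs (2 * m + 1) := h

lemma take_ofFn_congr {α : Type*} {T : ℕ} (n : ℕ) (f g : Fin T → α)
    (h : ∀ u : Fin T, (u : ℕ) < n → f u = g u) :
    (List.ofFn f).take n = (List.ofFn g).take n := by
  apply List.ext_getElem
  · simp
  · intro i h1 h2
    rw [List.getElem_take, List.getElem_take, List.getElem_ofFn, List.getElem_ofFn]
    apply h
    simp only [List.length_take, List.length_ofFn, lt_min_iff] at h1
    simpa using h1.1

lemma lossSum_lb {X : Type*} (K : ℕ) (hm hp : X → Fin K → Bool) (x : X)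
    (A : List (X × (Fin K → Bool)) → X → ProbabilityMeasure (Fin K → Bool))
    (T : ℕ) (t : Fin T) :
    2 ^ T * hammingLoss K (hm x) (hp x) ≤
      2 * ∑ ε : Fin T → Bool,
        ∫ z, hammingLoss K (strm K (hm x) (hp x) x T ε t).2 z
          ∂(A ((List.ofFn (strm K (hm x) (hp x) x T ε)).take t.1)
              (strm K (hm x) (hp x) x T ε t).1 : Measure (Fin K → Bool)) := by
  set a := hm x
  set b := hp x
  set η := hammingLoss K a b with hη
  set F : (Fin T → Bool) → ℝ := fun ε =>
    ∫ z, hammingLoss K (strm K a b x T ε t).2 z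
      ∂(A ((List.ofFn (strm K a b x T ε)).take t.1)
          (strm K a b x T ε t).1 : Measure (Fin K → Bool)) with hF
  show 2 ^ T * η ≤ 2 * ∑ ε, F ε
  set flp : (Fin T → Bool) → (Fin T → Bool) := fun ε => Function.update ε t (!ε t) with hflp
  have hinv : Function.Involutive flp := by
    intro ε
    funext u
    by_cases hu : u = t
    · subst hu
      simp [hflp, Function.update_self]
    · simp [hflp, Function.update_of_ne hu]
  have hμ : ∀ ε, (A ((List.ofFn (strm K a b x T (flp ε))).take t.1)
        (strm K a b x T (flp ε) t).1 : Measure (Fin K → Bool))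
      = (A ((List.ofFn (strm K a b x T ε)).take t.1)
        (strm K a b x T ε t).1 : Measure (Fin K → Bool)) := by
    intro ε
    have hlist : (List.ofFn (strm K a b x T (flp ε))).take t.1
        = (List.ofFn (strm K a b x T ε)).take t.1 := by
      apply take_ofFn_congr
      intro u hu
      have hne : u ≠ t := by
        intro he
        rw [he] at hu
        omega
      simp [strm, hflp, Function.update_of_ne hne]
    rw [hlist]
    rfl
  have hpt : ∀ ε, η ≤ F ε + F (flp ε) := by
    intro ε
    have hsum : F ε + F (flp ε)
        = ∫ z, (hammingLoss K (strm K a b x T ε t).2 z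
            + hammingLoss K (strm K a b x T (flp ε) t).2 z)
          ∂(A ((List.ofFn (strm K a b x T ε)).take t.1)
              (strm K a b x T ε t).1 : Measure (Fin K → Bool)) := by
      rw [integral_add Integrable.of_finite Integrable.of_finite, hF]
      simp only
      rw [hμ ε]
    rw [hsum]
    have hptwise : ∀ z : Fin K → Bool,
        η ≤ hammingLoss K (strm K a b x T ε t).2 z
            + hammingLoss K (strm K a b x T (flp ε) t).2 z := by
      intro z
      have hy2 : (strm K a b x T (flp ε) t).2 = if ε t then b else a := by
        simp only [strm, hflp, Function.update_self]
        by_cases h : ε t <;> simp [h]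
      have hy1 : (strm K a b x T ε t).2 = if ε t then a else b := rfl
      rw [hy1, hy2]
      by_cases h : ε t
      · simp only [if_pos h]
        exact hammingLoss_triangle K a b z
      · simp only [if_neg h]
        rw [hη, hammingLoss_comm]
        exact hammingLoss_triangle K b a z
    calc η = ∫ _z, η ∂(A ((List.ofFn (strm K a b x T ε)).take t.1)
              (strm K a b x T ε t).1 : Measure (Fin K → Bool)) := by
          rw [integral_const]
          simp
      _ ≤ _ := integral_mono (integrable_const _) Integrable.of_finite hptwise
  have hflip_sum : ∑ ε, F (flp ε) = ∑ ε, F ε :=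
    Fintype.sum_bijective flp hinv.bijective _ _ (fun ε => rfl)
  have h2 : 2 * ∑ ε, F ε = ∑ ε : Fin T → Bool, (F ε + F (flp ε)) := by
    rw [Finset.sum_add_distrib, hflip_sum]
    ring
  rw [h2]
  calc (2:ℝ) ^ T * η = ∑ _ε : Fin T → Bool, η := by
        rw [Finset.sum_const]
        simp [Fintype.card_fun]
    _ ≤ _ := Finset.sum_le_sum (fun ε _ => hpt ε)

lemma comp_ub {X : Type*} (K : ℕ) (H : Set (X → (Fin K → Bool)))
    (hm hp : X → Fin K → Bool) (hmH : hm ∈ H) (hpH : hp ∈ H) (x : X)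
    (T : ℕ) (ε : Fin T → Bool) :
    (⨅ h : H, ∑ t : Fin T, hammingLoss K (strm K (hm x) (hp x) x T ε t).2
        ((h : X → (Fin K → Bool)) (strm K (hm x) (hp x) x T ε t).1))
      ≤ hammingLoss K (hm x) (hp x) * (((T:ℝ) - |2 * (cntB ε : ℝ) - T|) / 2) := by
  set a := hm x
  set b := hp x
  set η := hammingLoss K a b with hη
  have hηnn : 0 ≤ η := hammingLoss_nonneg K a b
  have hbdd : BddBelow (Set.range fun h : H =>
      ∑ t : Fin T, hammingLoss K (strm K a b x T ε t).2
        ((h : X → (Fin K → Bool)) (strm K a b x T ε t).1)) := by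
    refine ⟨0, ?_⟩
    rintro r ⟨h, rfl⟩
    exact Finset.sum_nonneg fun t _ => hammingLoss_nonneg K _ _
  have hcnt_le : cntB ε ≤ T := by
    have := Finset.card_filter_le (Finset.univ : Finset (Fin T)) (fun t => ε t = true)
    simpa [cntB] using this
  have hcard : (Finset.univ.filter fun t : Fin T => ¬ (ε t = true)).card = T - cntB ε := by
    have := Finset.card_filter_add_card_filter_not
      (s := (Finset.univ : Finset (Fin T))) (p := fun t => ε t = true)
    simp only [Finset.card_univ, Fintype.card_fin] at this
    unfold cntB
    omega
  -- value of comparator hp : each true round costs η, false rounds cost 0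
  have hvp : ∑ t : Fin T, hammingLoss K (strm K a b x T ε t).2
        ((hp : X → (Fin K → Bool)) (strm K a b x T ε t).1) = (cntB ε : ℝ) * η := by
    have : ∀ t : Fin T, hammingLoss K (strm K a b x T ε t).2
        ((hp : X → (Fin K → Bool)) (strm K a b x T ε t).1)
        = if ε t = true then η else 0 := by
      intro t
      show hammingLoss K (if ε t then a else b) b = _
      by_cases h : ε t <;> simp [h, hη, hammingLoss_self]
    rw [Finset.sum_congr rfl (fun t _ => this t), Finset.sum_ite, Finset.sum_const,
      Finset.sum_const_zero, add_zero, nsmul_eq_mul]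
    rfl
  have hvm : ∑ t : Fin T, hammingLoss K (strm K a b x T ε t).2
        ((hm : X → (Fin K → Bool)) (strm K a b x T ε t).1) = ((T - cntB ε : ℕ) : ℝ) * η := by
    have : ∀ t : Fin T, hammingLoss K (strm K a b x T ε t).2
        ((hm : X → (Fin K → Bool)) (strm K a b x T ε t).1)
        = if ε t = true then 0 else η := by
      intro t
      show hammingLoss K (if ε t then a else b) a = _
      by_cases h : ε t <;> simp [h, hη, hammingLoss_self, hammingLoss_comm K b a]
    rw [Finset.sum_congr rfl (fun t _ => this t), Finset.sum_ite, Finset.sum_const_zero,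
      Finset.sum_const, zero_add, nsmul_eq_mul, hcard]
  rcases le_or_gt (2 * cntB ε) T with hc | hc
  · have habs : |2 * (cntB ε : ℝ) - T| = (T : ℝ) - 2 * cntB ε := by
      have hc' := (Nat.cast_le (α := ℝ)).mpr hc
      push_cast at hc'
      rw [abs_of_nonpos (by linarith)]
      ring
    have heq : η * (((T:ℝ) - |2 * (cntB ε : ℝ) - T|) / 2) = (cntB ε : ℝ) * η := by
      rw [habs]; ring
    rw [heq, ← hvp]
    exact ciInf_le hbdd ⟨hp, hpH⟩
  · have habs : |2 * (cntB ε : ℝ) - T| = 2 * (cntB ε : ℝ) - T := by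
      have hc' := (Nat.cast_lt (α := ℝ)).mpr hc
      push_cast at hc'
      rw [abs_of_nonneg (by linarith)]
    have heq : η * (((T:ℝ) - |2 * (cntB ε : ℝ) - T|) / 2) = ((T - cntB ε : ℕ) : ℝ) * η := by
      rw [habs]
      have : ((T - cntB ε : ℕ) : ℝ) = (T : ℝ) - cntB ε := by
        push_cast [hcnt_le]
        ring
      rw [this]
      ring
    rw [heq, ← hvm]
    exact ciInf_le hbdd ⟨hm, hmH⟩

/-- multilabel classification lower bound. Let `Y = Z = {0,1}^K` with the
normalized Hamming loss. If two hypotheses `h₋₁, h₊₁ ∈ H` satisfy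
`η = ℓ(h₋₁(x), h₊₁(x)) > 0` at some `x`, then every online learner suffers expected
regret at least `η·√(T/8)` on some stream of length `T` supported on `x` with labels
among `{h₋₁(x), h₊₁(x)}`. -/
theorem statement12 {X : Type*} [Nonempty X] (K : ℕ) (hK : 1 ≤ K)
    (H : Set (X → (Fin K → Bool))) (hH : H.Nonempty)
    (hm hp : X → (Fin K → Bool)) (hmH : hm ∈ H) (hpH : hp ∈ H)
    (x : X) (hη : 0 < hammingLoss K (hm x) (hp x)) :
    ∀ A : List (X × (Fin K → Bool)) → X → ProbabilityMeasure (Fin K → Bool),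
      ∀ T : ℕ, 1 ≤ T →
        ∃ s : Fin T → X × (Fin K → Bool),
          (∀ t, (s t).1 = x ∧ ((s t).2 = hm x ∨ (s t).2 = hp x)) ∧
          hammingLoss K (hm x) (hp x) * Real.sqrt (T / 8) ≤
            expectedRegret H (hammingLoss K) A s := by
  intro A T hT
  set η := hammingLoss K (hm x) (hp x) with hηdef
  have hηnn : (0:ℝ) ≤ η := le_of_lt hη
  suffices hex : ∃ ε : Fin T → Bool,
      η * Real.sqrt ((T:ℝ) / 8) ≤ expectedRegret H (hammingLoss K) A (strm K (hm x) (hp x) x T ε) by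
    obtain ⟨ε, hε⟩ := hex
    refine ⟨strm K (hm x) (hp x) x T ε, fun t => ⟨rfl, ?_⟩, hε⟩
    by_cases hb : ε t
    · left; simp [strm, hb]
    · right; simp [strm, hb]
  -- averaging argument
  have key : ∑ _ε : Fin T → Bool, η * Real.sqrt ((T:ℝ) / 8)
      ≤ ∑ ε : Fin T → Bool, expectedRegret H (hammingLoss K) A (strm K (hm x) (hp x) x T ε) := by
    -- the regret splits as loss sum minus comparator infimum
    have hsplit : ∑ ε : Fin T → Bool, expectedRegret H (hammingLoss K) A (strm K (hm x) (hp x) x T ε)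
        = (∑ ε : Fin T → Bool, ∑ t : Fin T,
            ∫ z, hammingLoss K (strm K (hm x) (hp x) x T ε t).2 z
              ∂(A ((List.ofFn (strm K (hm x) (hp x) x T ε)).take t.1)
                  (strm K (hm x) (hp x) x T ε t).1 : Measure (Fin K → Bool)))
          - ∑ ε : Fin T → Bool, ⨅ h : H, ∑ t : Fin T,
              hammingLoss K (strm K (hm x) (hp x) x T ε t).2
                ((h : X → (Fin K → Bool)) (strm K (hm x) (hp x) x T ε t).1) := by
      rw [← Finset.sum_sub_distrib]
      rfl
    rw [hsplit]
    -- lower bound on the loss sums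
    have hA : (T : ℝ) * (2 ^ T * η / 2) ≤ ∑ ε : Fin T → Bool, ∑ t : Fin T,
        ∫ z, hammingLoss K (strm K (hm x) (hp x) x T ε t).2 z
          ∂(A ((List.ofFn (strm K (hm x) (hp x) x T ε)).take t.1)
              (strm K (hm x) (hp x) x T ε t).1 : Measure (Fin K → Bool)) := by
      rw [Finset.sum_comm]
      calc (T : ℝ) * (2 ^ T * η / 2) = ∑ _t : Fin T, (2:ℝ) ^ T * η / 2 := by
            rw [Finset.sum_const, Finset.card_univ, Fintype.card_fin, nsmul_eq_mul]
        _ ≤ _ := by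
            apply Finset.sum_le_sum
            intro t _
            have := lossSum_lb K hm hp x A T t
            linarith
    -- upper bound on the comparator terms
    have hB : ∑ ε : Fin T → Bool, (⨅ h : H, ∑ t : Fin T,
          hammingLoss K (strm K (hm x) (hp x) x T ε t).2
            ((h : X → (Fin K → Bool)) (strm K (hm x) (hp x) x T ε t).1))
        ≤ η * ((2 ^ T * T - sAbs T) / 2) := by
      calc ∑ ε : Fin T → Bool, (⨅ h : H, ∑ t : Fin T,
            hammingLoss K (strm K (hm x) (hp x) x T ε t).2
              ((h : X → (Fin K → Bool)) (strm K (hm x) (hp x) x T ε t).1))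
          ≤ ∑ ε : Fin T → Bool, η * (((T:ℝ) - |2 * (cntB ε : ℝ) - T|) / 2) :=
            Finset.sum_le_sum (fun ε _ => comp_ub K H hm hp hmH hpH x T ε)
        _ = η * ((2 ^ T * T - sAbs T) / 2) := by
            rw [← Finset.mul_sum]
            congr 1
            rw [← Finset.sum_div]
            congr 1
            rw [Finset.sum_sub_distrib]
            unfold sAbs
            congr 1
            rw [Finset.sum_const, Finset.card_univ, nsmul_eq_mul]
            simp [Fintype.card_fun]
    -- sqrt lower bound
    have hsab := sqrt_half_le_sAbs T
    have h8 : Real.sqrt ((T:ℝ) / 8) = Real.sqrt ((T:ℝ) / 2) / 2 := by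
      rw [show (T:ℝ)/8 = ((T:ℝ)/2)/4 by ring, Real.sqrt_div (by positivity) 4,
        show (4:ℝ) = 2^2 by norm_num, Real.sqrt_sq (by norm_num)]
    have hLHS : ∑ _ε : Fin T → Bool, η * Real.sqrt ((T:ℝ) / 8)
        = 2 ^ T * (η * Real.sqrt ((T:ℝ) / 8)) := by
      rw [Finset.sum_const, Finset.card_univ, nsmul_eq_mul]
      simp [Fintype.card_fun]
    rw [hLHS, h8]
    have hfinal : 2 ^ T * (η * (Real.sqrt ((T:ℝ) / 2) / 2)) ≤ η * sAbs T / 2 := by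
      calc (2:ℝ) ^ T * (η * (Real.sqrt ((T:ℝ) / 2) / 2))
          = η * (2 ^ T * Real.sqrt ((T:ℝ) / 2)) / 2 := by ring
        _ ≤ η * sAbs T / 2 := by
            apply div_le_div_of_nonneg_right ?_ (by norm_num)
            exact mul_le_mul_of_nonneg_left hsab hηnn
    linarith
  obtain ⟨ε, -, hε⟩ := Finset.exists_le_of_sum_le Finset.univ_nonempty key
  exact ⟨ε, hε⟩
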